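/- Every digraph D has a vertex 4-colouring c such that every vertex v has at least ⌈d⁺(v)/2⌉ out-neighbours coloured differently from v (a majority 4-colouring). -/

import Mathlib

open Finset Relation Matrix


open scoped Classical in
lemma lemA {V : Type*} [Fintype V] (D : V → V → Prop) (hl : ∀ v, ¬ D v v)
    (C : Finset V) (w : V → ℚ) (c0 : V → Fin 4)
    (hw : ∀ v ∈ C, 0 < w v)
    (heig : ∀ v ∈ C, (∑ u ∈ C.filter (fun u => D u v), w u) ≤
      ((C.filter (fun y => D v y)).card : ℚ) * w v) :
    ∃ c : V → Fin 4, (∀ x, x ∉ C → c x = c0 x) ∧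
      ∀ v ∈ C, 2 * (univ.filter (fun y => D v y ∧ c y = c v)).card ≤
        (univ.filter (fun y => D v y)).card := by
  classical
  set ext : (V → Fin 4) → V → Fin 4 := fun f x => if x ∈ C then f x else c0 x with hext
  set Φ : (V → Fin 4) → ℚ := fun f =>
    ∑ x ∈ C, w x * ((univ.filter (fun y => D x y ∧ ext f y = ext f x)).card : ℚ) with hΦ
  obtain ⟨f0, -, hmin⟩ := Finset.exists_min_image (univ : Finset (V → Fin 4)) Φ
    ⟨fun _ => 0, mem_univ _⟩
  set c : V → Fin 4 := ext f0 with hc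
  refine ⟨c, fun x hx => by simp [hc, hext, hx], ?_⟩
  intro v hv
  have hupdate : ∀ a : Fin 4, ext (Function.update f0 v a) = Function.update c v a := by
    intro a; funext x
    by_cases hx : x = v
    · subst hx; simp [hext, hc, hv, Function.update_apply]
    · simp [hext, hc, Function.update_apply, hx]
  set dtot := (univ.filter (fun y => D v y)).card with hdtot
  set dIn := (C.filter (fun y => D v y)).card with hdIn
  set sa : Fin 4 → ℕ := fun a => (univ.filter (fun y => D v y ∧ c y = a)).card with hsa
  set samec : V → ℕ := fun x => (univ.filter (fun y => D x y ∧ c y = c x)).card with hsamec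
  -- key per-colour inequality from minimality of Φ
  have key : ∀ a : Fin 4, w v * (sa (c v) : ℚ) ≤ w v * (sa a : ℚ) +
      ∑ x ∈ C.erase v, w x * (if D x v ∧ c x = a then (1:ℚ) else 0) := by
    intro a
    have h1 : Φ f0 ≤ Φ (Function.update f0 v a) := hmin _ (mem_univ _)
    set ca : V → Fin 4 := Function.update c v a with hca
    have e0 : Φ f0 = w v * (samec v : ℚ) + ∑ x ∈ C.erase v, w x * (samec x : ℚ) :=
      (Finset.add_sum_erase C (fun x => w x * (samec x : ℚ)) hv).symm
    have hterm_v : (univ.filter (fun y => D v y ∧ ca y = ca v)) =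
        (univ.filter (fun y => D v y ∧ c y = a)) := by
      apply Finset.filter_congr
      intro y _
      by_cases hyv : y = v
      · subst hyv; simp [hl y]
      · simp [hca, Function.update_apply, hyv]
    have hterm_x : ∀ x ∈ C.erase v,
        ((univ.filter (fun y => D x y ∧ ca y = ca x)).card : ℚ) ≤
          (samec x : ℚ) + (if D x v ∧ c x = a then (1:ℚ) else 0) := by
      intro x hx
      have hxv : x ≠ v := Finset.ne_of_mem_erase hx
      have hcax : ca x = c x := by simp [hca, Function.update_apply, hxv]
      by_cases hcond : D x v ∧ c x = a
      · rw [if_pos hcond]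
        have hsub : (univ.filter (fun y => D x y ∧ ca y = ca x)) ⊆
            insert v (univ.filter (fun y => D x y ∧ c y = c x)) := by
          intro y hy
          rw [Finset.mem_filter] at hy
          by_cases hyv : y = v
          · exact hyv ▸ Finset.mem_insert_self _ _
          · refine Finset.mem_insert_of_mem (Finset.mem_filter.2 ⟨mem_univ _, hy.2.1, ?_⟩)
            have h2 := hy.2.2
            rwa [hcax, hca, Function.update_apply, if_neg hyv] at h2
        have h3 : (univ.filter (fun y => D x y ∧ ca y = ca x)).card ≤ samec x + 1 :=
          le_trans (Finset.card_le_card hsub) (Finset.card_insert_le _ _)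
        exact_mod_cast h3
      · rw [if_neg hcond, add_zero]
        have hsub : (univ.filter (fun y => D x y ∧ ca y = ca x)) ⊆
            (univ.filter (fun y => D x y ∧ c y = c x)) := by
          intro y hy
          rw [Finset.mem_filter] at hy
          obtain ⟨-, hy1, hy2⟩ := hy
          rw [hcax] at hy2
          by_cases hyv : y = v
          · exfalso; subst hyv
            rw [hca, Function.update_apply, if_pos rfl] at hy2
            exact hcond ⟨hy1, hy2.symm⟩
          · rw [hca, Function.update_apply, if_neg hyv] at hy2
            exact Finset.mem_filter.2 ⟨mem_univ _, hy1, hy2⟩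
        exact_mod_cast Finset.card_le_card hsub
    have hΦa : Φ (Function.update f0 v a) ≤ w v * (sa a : ℚ) +
        ∑ x ∈ C.erase v, w x * ((samec x : ℚ) + (if D x v ∧ c x = a then (1:ℚ) else 0)) := by
      have e1 : Φ (Function.update f0 v a) =
          w v * ((univ.filter (fun y => D v y ∧ ca y = ca v)).card : ℚ) +
          ∑ x ∈ C.erase v, w x * ((univ.filter (fun y => D x y ∧ ca y = ca x)).card : ℚ) := by
        have := (Finset.add_sum_erase C
          (fun x => w x * ((univ.filter (fun y => D x y ∧ ca y = ca x)).card : ℚ)) hv).symm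
        calc Φ (Function.update f0 v a)
            = ∑ x ∈ C, w x * ((univ.filter (fun y => D x y ∧ ca y = ca x)).card : ℚ) := by
              rw [hΦ]; simp only [hupdate a, hca]
          _ = _ := this
      rw [e1, hterm_v]
      refine add_le_add le_rfl (Finset.sum_le_sum ?_)
      intro x hx
      exact mul_le_mul_of_nonneg_left (hterm_x x hx)
        (hw x (Finset.mem_of_mem_erase hx)).le
    have hexp : ∑ x ∈ C.erase v, w x * ((samec x : ℚ) +
        (if D x v ∧ c x = a then (1:ℚ) else 0)) =
        (∑ x ∈ C.erase v, w x * (samec x : ℚ)) +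
        ∑ x ∈ C.erase v, w x * (if D x v ∧ c x = a then (1:ℚ) else 0) := by
      simp [mul_add, Finset.sum_add_distrib]
    have hsv : samec v = sa (c v) := rfl
    rw [e0, hsv] at h1
    rw [hexp] at hΦa
    linarith [le_trans h1 hΦa]
  -- sum the key inequality over the four colours
  have hsum := Finset.sum_le_sum (fun a (_ : a ∈ (univ : Finset (Fin 4))) => key a)
  have hL : ∑ _a ∈ (univ : Finset (Fin 4)), w v * (sa (c v) : ℚ)
      = 4 * (w v * (sa (c v) : ℚ)) := by
    simp [Finset.sum_const]
    try ring
  have hfib : dtot = ∑ a ∈ (univ : Finset (Fin 4)),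
      ((univ.filter (fun y => D v y)).filter (fun y => c y = a)).card :=
    Finset.card_eq_sum_card_fiberwise (fun x _ => mem_univ (c x))
  have hsatot : ∑ a ∈ (univ : Finset (Fin 4)), (sa a : ℚ) = (dtot : ℚ) := by
    rw [hfib]
    push_cast
    apply Finset.sum_congr rfl
    intro a _
    rw [hsa]
    norm_cast
    rw [Finset.filter_filter]
  have hind : ∀ x, ∑ a ∈ (univ : Finset (Fin 4)),
      (if D x v ∧ c x = a then (1:ℚ) else 0) = if D x v then 1 else 0 := by
    intro x
    by_cases hdx : D x v
    · simp [hdx]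
    · simp [hdx]
  have hE : ∑ a ∈ (univ : Finset (Fin 4)), ∑ x ∈ C.erase v,
      w x * (if D x v ∧ c x = a then (1:ℚ) else 0) ≤ (dIn : ℚ) * w v := by
    rw [Finset.sum_comm]
    have e2 : ∀ x ∈ C.erase v, ∑ a ∈ (univ : Finset (Fin 4)),
        w x * (if D x v ∧ c x = a then (1:ℚ) else 0) =
        w x * (if D x v then (1:ℚ) else 0) := by
      intro x _
      rw [← Finset.mul_sum, hind x]
    rw [Finset.sum_congr rfl e2]
    have e3 : ∑ x ∈ C.erase v, w x * (if D x v then (1:ℚ) else 0)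
        = ∑ x ∈ (C.erase v).filter (fun x => D x v), w x := by
      rw [Finset.sum_filter]
      apply Finset.sum_congr rfl
      intro x _
      by_cases hdx : D x v <;> simp [hdx]
    rw [e3]
    refine le_trans (Finset.sum_le_sum_of_subset_of_nonneg
      (Finset.filter_subset_filter _ (Finset.erase_subset _ _)) ?_) (heig v hv)
    intro x hx _
    exact (hw x (Finset.mem_of_mem_filter x hx)).le
  -- combine
  have hRL : 4 * (w v * (sa (c v) : ℚ)) ≤ w v * (dtot : ℚ) + (dIn : ℚ) * w v := by
    rw [← hL]
    refine le_trans hsum ?_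
    rw [Finset.sum_add_distrib, ← Finset.mul_sum, hsatot]
    exact add_le_add le_rfl hE
  have hdin_le : (dIn : ℚ) ≤ (dtot : ℚ) := by
    exact_mod_cast Finset.card_le_card (Finset.filter_subset_filter _ (Finset.subset_univ C))
  have hwv := hw v hv
  have hfinal : 4 * (sa (c v) : ℚ) ≤ 2 * (dtot : ℚ) := by nlinarith
  have : 4 * sa (c v) ≤ 2 * dtot := by exact_mod_cast hfinal
  have hgoal : 2 * sa (c v) ≤ dtot := by omega
  exact hgoal
open scoped Classical in
lemma lemB {V : Type*} [Fintype V] (D : V → V → Prop)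
    (C : Finset V) (hne : C.Nonempty)
    (hd : ∀ u ∈ C, (C.filter (fun y => D u y)).Nonempty)
    (hconn : ∀ u ∈ C, ∀ z ∈ C,
      Relation.ReflTransGen (fun a b => D a b ∧ a ∈ C ∧ b ∈ C) u z) :
    ∃ w : V → ℚ, (∀ v ∈ C, 0 < w v) ∧
      ∀ v ∈ C, (∑ u ∈ C.filter (fun u => D u v), w u) ≤
        ((C.filter (fun y => D v y)).card : ℚ) * w v := by
  classical
  haveI : Nonempty {x // x ∈ C} := ⟨⟨hne.choose, hne.choose_spec⟩⟩
  set d : {x // x ∈ C} → ℕ := fun u => (C.filter (fun y => D u.1 y)).card with hdd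
  have hdpos : ∀ u : {x // x ∈ C}, 0 < d u := fun u => Finset.card_pos.2 (hd u.1 u.2)
  set P : Matrix {x // x ∈ C} {x // x ∈ C} ℚ :=
    fun u z => if D u.1 z.1 then ((d u : ℚ))⁻¹ else 0 with hP
  have hPnn : ∀ u z, 0 ≤ P u z := by
    intro u z
    rw [hP]; dsimp only
    split
    · positivity
    · exact le_refl 0
  have hcard : ∀ u : {x // x ∈ C},
      (univ.filter (fun z : {x // x ∈ C} => D u.1 z.1)).card = d u := by
    intro u
    rw [Finset.univ_eq_attach,
      Finset.filter_attach (fun y => D u.1 y) C, Finset.card_map, Finset.card_attach]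
  have hrow : ∀ u : {x // x ∈ C}, ∑ z : {x // x ∈ C}, P u z = 1 := by
    intro u
    have e : ∑ z : {x // x ∈ C}, P u z =
        ((univ.filter (fun z : {x // x ∈ C} => D u.1 z.1)).card : ℚ) * (d u : ℚ)⁻¹ := by
      rw [hP]; dsimp only
      rw [Finset.sum_ite, Finset.sum_const, Finset.sum_const_zero, add_zero, nsmul_eq_mul]
    rw [e, hcard u, mul_inv_cancel₀]
    exact_mod_cast (hdpos u).ne'
  have hdet : (P - 1).det = 0 := by
    rw [← Matrix.exists_mulVec_eq_zero_iff]
    refine ⟨fun _ => 1, ?_, ?_⟩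
    · intro h
      have := congrFun h (Classical.arbitrary _)
      simp at this
    · funext u
      simp only [Matrix.mulVec, dotProduct, Matrix.sub_apply, Matrix.one_apply, mul_one,
        Pi.zero_apply]
      rw [Finset.sum_sub_distrib, hrow u]
      simp
  have hdetT : ((P - 1)ᵀ).det = 0 := by rw [Matrix.det_transpose]; exact hdet
  obtain ⟨x, hx0, hxker⟩ := Matrix.exists_mulVec_eq_zero_iff.2 hdetT
  have hfix : ∀ z, ∑ u : {x // x ∈ C}, P u z * x u = x z := by
    intro z
    have h := congrFun hxker z
    simp only [Matrix.mulVec, dotProduct, Matrix.transpose_apply, Matrix.sub_apply,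
      Matrix.one_apply, Pi.zero_apply, sub_mul] at h
    rw [Finset.sum_sub_distrib] at h
    have e3 : ∑ u : {x // x ∈ C}, (if u = z then (1:ℚ) else 0) * x u = x z := by
      simp
    rw [e3] at h
    linarith
  set y : {x // x ∈ C} → ℚ := fun u => |x u| with hy
  have hynn : ∀ u, 0 ≤ y u := fun u => abs_nonneg _
  have hstep : ∀ z, y z ≤ ∑ u : {x // x ∈ C}, P u z * y u := by
    intro z
    calc y z = |∑ u : {x // x ∈ C}, P u z * x u| := by rw [hfix z]
      _ ≤ ∑ u : {x // x ∈ C}, |P u z * x u| := Finset.abs_sum_le_sum_abs _ _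
      _ = ∑ u : {x // x ∈ C}, P u z * y u := by
          apply Finset.sum_congr rfl
          intro u _
          rw [abs_mul, abs_of_nonneg (hPnn u z)]
  have htot : ∑ z : {x // x ∈ C}, (∑ u : {x // x ∈ C}, P u z * y u)
      = ∑ z : {x // x ∈ C}, y z := by
    rw [Finset.sum_comm]
    apply Finset.sum_congr rfl
    intro u _
    rw [← Finset.sum_mul, hrow u, one_mul]
  have heq : ∀ z, ∑ u : {x // x ∈ C}, P u z * y u = y z := by
    have hzero : ∑ z : {x // x ∈ C}, ((∑ u : {x // x ∈ C}, P u z * y u) - y z) = 0 := by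
      rw [Finset.sum_sub_distrib, htot, sub_self]
    have hnn : ∀ z ∈ (univ : Finset {x // x ∈ C}),
        0 ≤ (∑ u : {x // x ∈ C}, P u z * y u) - y z :=
      fun z _ => sub_nonneg.2 (hstep z)
    intro z
    have := (Finset.sum_eq_zero_iff_of_nonneg hnn).1 hzero z (mem_univ z)
    linarith
  have hstep_pos : ∀ u z : {x // x ∈ C}, D u.1 z.1 → 0 < y u → 0 < y z := by
    intro u z hD hyu
    have h1 : P u z * y u ≤ ∑ u' : {x // x ∈ C}, P u' z * y u' :=
      Finset.single_le_sum (fun u' _ => mul_nonneg (hPnn u' z) (hynn u')) (mem_univ u)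
    have h2 : 0 < P u z * y u := by
      have : P u z = ((d u : ℚ))⁻¹ := by rw [hP]; dsimp only; rw [if_pos hD]
      rw [this]
      have hdu : (0:ℚ) < (d u : ℚ) := by exact_mod_cast hdpos u
      positivity
    rw [heq z] at h1
    linarith
  have hex : ∃ u, 0 < y u := by
    by_contra h
    push_neg at h
    apply hx0
    funext u
    have h1 : y u = 0 := le_antisymm (h u) (hynn u)
    simpa [hy, abs_eq_zero] using h1
  obtain ⟨u0, hu0⟩ := hex
  have hprop : ∀ a b : V, Relation.ReflTransGen (fun a b => D a b ∧ a ∈ C ∧ b ∈ C) a b →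
      ∀ (ha : a ∈ C) (hb : b ∈ C), 0 < y ⟨a, ha⟩ → 0 < y ⟨b, hb⟩ := by
    intro a b h
    induction h with
    | refl => intro ha hb hy; exact hy
    | tail h1 h2 ih =>
      intro ha hb hy2
      obtain ⟨hD, hm, hb'⟩ := h2
      exact hstep_pos ⟨_, hm⟩ ⟨_, hb⟩ hD (ih ha hm hy2)
  have hypos : ∀ z : {x // x ∈ C}, 0 < y z := by
    intro z
    have := hprop u0.1 z.1 (hconn u0.1 u0.2 z.1 z.2) u0.2 z.2
    simpa using this hu0
  refine ⟨fun z => if h : z ∈ C then y ⟨z, h⟩ * ((C.filter (fun t => D z t)).card : ℚ)⁻¹ else 1,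
    ?_, ?_⟩
  · intro v hvC
    dsimp only
    rw [dif_pos hvC]
    have h1 := hypos ⟨v, hvC⟩
    have h2 : (0:ℚ) < ((C.filter (fun t => D v t)).card : ℚ) := by
      exact_mod_cast hdpos ⟨v, hvC⟩
    positivity
  · intro v hvC
    have hLHS : (∑ u ∈ C.filter (fun u => D u v),
        (if h : u ∈ C then y ⟨u, h⟩ * ((C.filter (fun t => D u t)).card : ℚ)⁻¹ else 1))
        = y ⟨v, hvC⟩ := by
      rw [Finset.sum_filter, ← Finset.sum_attach C
        (fun u => if D u v then
          (if h : u ∈ C then y ⟨u, h⟩ * ((C.filter (fun t => D u t)).card : ℚ)⁻¹ else 1) else 0)]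
      rw [← heq ⟨v, hvC⟩, Finset.univ_eq_attach]
      apply Finset.sum_congr rfl
      intro u _
      rw [dif_pos u.2]
      by_cases hD : D u.1 v
      · rw [if_pos hD, hP]; dsimp only
        rw [if_pos hD]
        ring
      · rw [if_neg hD, hP]; dsimp only
        rw [if_neg hD, zero_mul]
    dsimp only
    rw [hLHS, dif_pos hvC]
    rw [← mul_assoc, mul_comm ((C.filter (fun y => D v y)).card : ℚ) (y ⟨v, hvC⟩), mul_assoc,
      mul_inv_cancel₀, mul_one]
    exact_mod_cast (hdpos ⟨v, hvC⟩).ne'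

open scoped Classical in
lemma condOf {V : Type*} [Fintype V] (D : V → V → Prop) (v : V) (c : V → Fin 4)
    (h : 2 * (univ.filter (fun y => D v y ∧ c y = c v)).card ≤
      (univ.filter (fun y => D v y)).card) :
    (univ.filter (fun y => D v y)).card ≤
      2 * (univ.filter (fun y => D v y ∧ c y ≠ c v)).card := by
  classical
  have hsplit := Finset.card_filter_add_card_filter_not
    (s := univ.filter (fun y => D v y)) (p := fun y => c y = c v)
  rw [Finset.filter_filter, Finset.filter_filter] at hsplit
  have e1 : (univ.filter (fun y => D v y ∧ c y = c v)).card =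
      (univ.filter (fun a => D v a ∧ c a = c v)).card := rfl
  have e2 : (univ.filter (fun y => D v y ∧ c y ≠ c v)).card =
      (univ.filter (fun a => D v a ∧ ¬ c a = c v)).card := rfl
  omega

open scoped Classical in
lemma condCongr {V : Type*} [Fintype V] (D : V → V → Prop) (v : V) (c0 c1 : V → Fin 4)
    (hv : c1 v = c0 v) (hnb : ∀ x, D v x → c1 x = c0 x)
    (h : (univ.filter (fun y => D v y)).card ≤
      2 * (univ.filter (fun y => D v y ∧ c0 y ≠ c0 v)).card) :
    (univ.filter (fun y => D v y)).card ≤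
      2 * (univ.filter (fun y => D v y ∧ c1 y ≠ c1 v)).card := by
  classical
  have e : (univ.filter (fun y => D v y ∧ c1 y ≠ c1 v)) =
      (univ.filter (fun y => D v y ∧ c0 y ≠ c0 v)) := by
    apply Finset.filter_congr
    intro y _
    by_cases hD : D v y
    · simp [hD, hnb y hD, hv]
    · simp [hD]
  rw [e]
  exact h

open scoped Classical in
lemma mainLemma {V : Type*} [Fintype V] (D : V → V → Prop) (hl : ∀ v, ¬ D v v) :
    ∀ (n : ℕ) (S : Finset V), S.card ≤ n → ∀ c0 : V → Fin 4,
    (∀ u, u ∉ S → ∀ x, D u x → x ∉ S) →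
    (∀ v, v ∉ S → (univ.filter (fun y => D v y)).card ≤
        2 * (univ.filter (fun y => D v y ∧ c0 y ≠ c0 v)).card) →
    ∃ c : V → Fin 4, (∀ x, x ∉ S → c x = c0 x) ∧ ∀ v,
      (univ.filter (fun y => D v y)).card ≤
        2 * (univ.filter (fun y => D v y ∧ c y ≠ c v)).card := by
  intro n
  induction n with
  | zero =>
    intro S hS c0 _ hgood
    have hSempty : S = ∅ := Finset.card_eq_zero.1 (le_antisymm hS (Nat.zero_le _))
    subst hSempty
    exact ⟨c0, fun x _ => rfl, fun v => hgood v (Finset.notMem_empty v)⟩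
  | succ n ih =>
    intro S hS c0 hclosed hgood
    by_cases hSne : S.Nonempty
    case neg =>
      have hSempty : S = ∅ := Finset.not_nonempty_iff_eq_empty.1 hSne
      subst hSempty
      exact ⟨c0, fun x _ => rfl, fun v => hgood v (Finset.notMem_empty v)⟩
    case pos =>
    obtain ⟨v0, hv0S, hmin⟩ := Finset.exists_min_image S
      (fun v => ((univ.filter (fun z => Relation.ReflTransGen D v z)) ∩ S).card) hSne
    set C := (univ.filter (fun z => Relation.ReflTransGen D v0 z)) ∩ S with hC
    have hv0C : v0 ∈ C := by
      rw [hC, Finset.mem_inter, Finset.mem_filter]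
      exact ⟨⟨mem_univ _, Relation.ReflTransGen.refl⟩, hv0S⟩
    have hCS : C ⊆ S := by rw [hC]; exact Finset.inter_subset_right
    have hreach : ∀ u ∈ C, Relation.ReflTransGen D v0 u := by
      intro u hu
      rw [hC, Finset.mem_inter, Finset.mem_filter] at hu
      exact hu.1.2
    have hCclosed : ∀ u ∈ C, ∀ x, D u x → x ∈ S → x ∈ C := by
      intro u hu x hDux hxS
      rw [hC, Finset.mem_inter, Finset.mem_filter]
      exact ⟨⟨mem_univ _, (hreach u hu).tail hDux⟩, hxS⟩
    have hnotS : ∀ a b, Relation.ReflTransGen D a b → a ∉ S → b ∉ S := by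
      intro a b h
      induction h with
      | refl => exact fun h => h
      | tail h1 h2 ih2 => intro ha; exact hclosed _ (ih2 ha) _ h2
    have hback : ∀ u ∈ C, Relation.ReflTransGen D u v0 := by
      intro u hu
      have hsub : (univ.filter (fun z => Relation.ReflTransGen D u z)) ∩ S ⊆ C := by
        intro z hz
        rw [Finset.mem_inter, Finset.mem_filter] at hz
        rw [hC, Finset.mem_inter, Finset.mem_filter]
        exact ⟨⟨mem_univ _, (hreach u hu).trans hz.1.2⟩, hz.2⟩
      have hcard := hmin u (hCS hu)
      have heqC := Finset.eq_of_subset_of_card_le hsub hcard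
      have hv0' : v0 ∈ (univ.filter (fun z => Relation.ReflTransGen D u z)) ∩ S := by
        rw [heqC]; exact hv0C
      rw [Finset.mem_inter, Finset.mem_filter] at hv0'
      exact hv0'.1.2
    have hpathC : ∀ u ∈ C, ∀ z ∈ C,
        Relation.ReflTransGen (fun a b => D a b ∧ a ∈ C ∧ b ∈ C) u z := by
      intro u hu z hz
      have key : ∀ u', Relation.ReflTransGen D u' z → u' ∈ C →
          Relation.ReflTransGen (fun a b => D a b ∧ a ∈ C ∧ b ∈ C) u' z := by
        intro u' h1
        induction h1 using Relation.ReflTransGen.head_induction_on with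
        | refl => exact fun _ => Relation.ReflTransGen.refl
        | @head a b hab hbz ih2 =>
          intro haC
          have hbS : b ∈ S := by
            by_contra hbS
            exact (hnotS b z hbz hbS) (hCS hz)
          have hbC : b ∈ C := hCclosed a haC b hab hbS
          exact Relation.ReflTransGen.head ⟨hab, haC, hbC⟩ (ih2 hbC)
      exact key u ((hback u hu).trans (hreach z hz)) hu
    obtain ⟨w, hw, heig⟩ : ∃ w : V → ℚ, (∀ v ∈ C, 0 < w v) ∧ ∀ v ∈ C,
        (∑ u ∈ C.filter (fun u => D u v), w u) ≤
          ((C.filter (fun y => D v y)).card : ℚ) * w v := by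
      by_cases hC2 : 1 < C.card
      · refine lemB D C ⟨v0, hv0C⟩ ?_ hpathC
        intro u hu
        obtain ⟨z, hzC, hzu⟩ := Finset.exists_mem_ne hC2 u
        rcases (Relation.ReflTransGen.cases_head (hpathC u hu z hzC)) with heq1 | ht
        · exact absurd heq1.symm hzu
        · obtain ⟨t, ⟨hDt, -, htC⟩, -⟩ := ht
          exact ⟨t, Finset.mem_filter.2 ⟨htC, hDt⟩⟩
      · refine ⟨fun _ => 1, fun v _ => one_pos, ?_⟩
        intro v hvC
        have hc1 : C.card = 1 := le_antisymm (not_lt.1 hC2) (Finset.card_pos.2 ⟨v0, hv0C⟩)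
        obtain ⟨z, hz⟩ := Finset.card_eq_one.1 hc1
        have hvz : v = z := by
          rw [hz, Finset.mem_singleton] at hvC
          exact hvC
        have hfe : C.filter (fun u => D u v) = ∅ := by
          rw [hz]
          ext u
          simp only [Finset.mem_filter, Finset.mem_singleton, Finset.notMem_empty, iff_false,
            not_and]
          intro hu
          rw [hu, hvz]
          exact hl z
        rw [hfe]
        simp only [Finset.sum_empty]
        positivity
    obtain ⟨c1, hc1a, hc1g⟩ := lemA D hl C w c0 hw heig
    set S' := S \ C with hS'
    have hS'lt : S'.card < S.card :=
      Finset.card_lt_card (Finset.sdiff_ssubset hCS ⟨v0, hv0C⟩)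
    have hS'card : S'.card ≤ n := by omega
    have hclosed' : ∀ u, u ∉ S' → ∀ x, D u x → x ∉ S' := by
      intro u hu x hDux
      rw [hS', Finset.mem_sdiff] at hu
      push_neg at hu
      rw [hS', Finset.mem_sdiff]
      rintro ⟨hxS, hxC⟩
      by_cases huS : u ∈ S
      · exact hxC (hCclosed u (hu huS) x hDux hxS)
      · exact (hclosed u huS x hDux) hxS
    have hgood' : ∀ v, v ∉ S' → (univ.filter (fun y => D v y)).card ≤
        2 * (univ.filter (fun y => D v y ∧ c1 y ≠ c1 v)).card := by
      intro v hv
      by_cases hvC : v ∈ C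
      · exact condOf D v c1 (hc1g v hvC)
      · have hvS : v ∉ S := by
          rw [hS', Finset.mem_sdiff] at hv
          push_neg at hv
          intro hvS
          exact hvC (hv hvS)
        refine condCongr D v c0 c1 (hc1a v hvC) ?_ (hgood v hvS)
        intro x hDx
        exact hc1a x (fun hxC => (hclosed v hvS x hDx) (hCS hxC))
    obtain ⟨c, hca, hcg⟩ := ih S' hS'card c1 hclosed' hgood'
    refine ⟨c, ?_, hcg⟩
    intro x hxS
    have hxC : x ∉ C := fun h => hxS (hCS h)
    have hxS' : x ∉ S' := by
      rw [hS', Finset.mem_sdiff]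
      tauto
    rw [hca x hxS', hc1a x hxC]

/-- Every digraph has a majority 4-colouring: a 4-colouring `c` such that every
vertex `v` has at least `⌈d⁺(v)/2⌉` out-neighbours coloured differently from `v`. -/
theorem stmt18 {V : Type*} [Fintype V] (D : V → V → Prop)
    (hloopless : ∀ v, ¬ D v v) :
    ∃ c : V → Fin 4, ∀ v : V,
      {w | D v w}.ncard ≤ 2 * {w | D v w ∧ c w ≠ c v}.ncard := by
  classical
  obtain ⟨c, -, hc⟩ := mainLemma D hloopless (Fintype.card V) univ
    (le_of_eq Finset.card_univ) (fun _ => 0)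
    (fun u hu => absurd (mem_univ u) hu) (fun v hv => absurd (mem_univ v) hv)
  refine ⟨c, fun v => ?_⟩
  have h1 : {w | D v w}.ncard = (univ.filter (fun y => D v y)).card := by
    rw [Set.ncard_eq_toFinset_card']
    simp [Set.toFinset_setOf]
  have h2 : {w | D v w ∧ c w ≠ c v}.ncard =
      (univ.filter (fun y => D v y ∧ c y ≠ c v)).card := by
    rw [Set.ncard_eq_toFinset_card']
    simp [Set.toFinset_setOf]
  rw [h1, h2]
  exact hc v
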